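/- Let (V, E, o, t, inv) be a finite multigraph, let m : E → ℝ^d and φ : E → ℝ be 1-forms, and suppose there are edges e₁, …, e_d ∈ E such that m(e₁), …, m(e_d) are linearly independent over ℝ. Set B = {e₁, …, e_d, inv e₁, …, inv e_d}. Then there exists θ₀ ∈ ℝ^d such that, defining φ̃ : E → ℝ by φ̃(e) = φ(e) + ⟨m(e), θ₀⟩ if e ∈ (supp m ∪ supp φ) \ B and φ̃(e) = 0 otherwise, one has: φ̃ is a 1-form; Δ_{m,φ}(θ) = Δ_{m,φ̃}(θ − θ₀) for every θ ∈ ℝ^d; and #supp φ̃ ≤ #(supp m ∪ supp φ) − 2d. (Paper: Corollary 2.4(i)–(ii), formulas (wtcat), (seth), at the level of fiber operators.) -/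

import Mathlib

open scoped Classical
open Finset

noncomputable section

/-- The degree of a vertex: the number of oriented edges starting at it. -/
def mdeg {V E : Type} [Fintype E] (o : E → V) (v : V) : ℕ :=
  (Finset.univ.filter fun e => o e = v).card

/-- The combinatorial magnetic Laplacian `Δ_α`. -/
def magLap {V E : Type} [Fintype E] (o t : E → V) (α : E → ℝ)
    (f : V → ℂ) (v : V) : ℂ :=
  ∑ e ∈ Finset.univ.filter (fun e => o e = v),
    (f v - Complex.exp (Complex.I * (α e : ℂ)) * f (t e))

/-- The fiber magnetic Laplacian `Δ_{m,φ}(θ)`. -/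
def fiberLap {V E : Type} [Fintype E] {d : ℕ} (o t : E → V)
    (m : E → Fin d → ℝ) (φ : E → ℝ) (θ : Fin d → ℝ) (f : V → ℂ) (v : V) : ℂ :=
  (mdeg o v : ℂ) * f v -
    ∑ e ∈ Finset.univ.filter (fun e => o e = v),
      Complex.exp (Complex.I * ((φ e + ∑ i, m e i * θ i : ℝ) : ℂ)) * f (t e)

/-- Standard inner product on `ℂ^V` (conjugate-linear in the first argument). -/
def dotC {V : Type} [Fintype V] (f g : V → ℂ) : ℂ :=
  ∑ v, (starRingEnd ℂ) (f v) * g v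

/-- `lam` lists the eigenvalues of the operator `T` on `ℂ^V` in nondecreasing
order, counted with multiplicity (witnessed by an orthonormal eigenbasis). -/
def IsEigList {V : Type} [Fintype V] (T : (V → ℂ) → (V → ℂ))
    (lam : Fin (Fintype.card V) → ℝ) : Prop :=
  Monotone lam ∧ ∃ u : Fin (Fintype.card V) → (V → ℂ),
    (∀ i j, dotC (u i) (u j) = if i = j then (1 : ℂ) else 0) ∧
    ∀ i, T (u i) = fun v => ((lam i : ℝ) : ℂ) * u i v

/-- A closed walk in the multigraph. -/
def IsClosedWalk {V E : Type} (o t : E → V) {k : ℕ} (c : Fin (k + 1) → E) : Prop :=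
  (∀ i : Fin k, t (c i.castSucc) = o (c i.succ)) ∧ t (c (Fin.last k)) = o (c 0)

/-- Two forms have the same flux along every closed walk. -/
def SameFlux {V E W : Type} [AddCommMonoid W] (o t : E → V) (b b' : E → W) : Prop :=
  ∀ (k : ℕ) (c : Fin (k + 1) → E), IsClosedWalk o t c →
    ∑ i, b (c i) = ∑ i, b' (c i)

/-- Connectivity of the multigraph: any two distinct vertices are the endpoints
of some walk. -/
def MGConnected {V E : Type} (o t : E → V) : Prop :=
  ∀ u v : V, u ≠ v → ∃ (k : ℕ) (c : Fin (k + 1) → E),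
    (∀ i : Fin k, t (c i.castSucc) = o (c i.succ)) ∧ o (c 0) = u ∧ t (c (Fin.last k)) = v

/-- The set of fluxes of a form along all closed walks. -/
def fluxSet {V E W : Type} [AddCommMonoid W] (o t : E → V) (b : E → W) : Set W :=
  {w | ∃ (k : ℕ) (c : Fin (k + 1) → E), IsClosedWalk o t c ∧ ∑ i, b (c i) = w}

/-- The number of oriented edges in the support of a form. -/
def suppCard {E : Type} [Fintype E] {W : Type} [Zero W] (b : E → W) : ℕ :=
  (Finset.univ.filter fun e => b e ≠ 0).card

/-- The integer lattice `ℤ^d` inside `ℝ^d`. -/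
def intLattice (d : ℕ) : Set (Fin d → ℝ) :=
  {w | ∀ i, ∃ z : ℤ, w i = (z : ℝ)}

/-- Reduction of the magnetic parameters: if `m(e₁), …, m(e_d)` are linearly
independent, then there exists `θ₀` such that, with
`φ̃(e) = φ(e) + ⟨m(e), θ₀⟩` on `(supp m ∪ supp φ) \ B` (where
`B = {e₁,…,e_d, inv e₁,…,inv e_d}`) and `φ̃(e) = 0` otherwise, the function
`φ̃` is a 1-form, `Δ_{m,φ}(θ) = Δ_{m,φ̃}(θ − θ₀)` for all `θ`, and
`#supp φ̃ ≤ #(supp m ∪ supp φ) − 2d`. -/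
theorem fiber_gauge_reduction
    {V E : Type} [Fintype V] [Fintype E] [Nonempty V] {d : ℕ}
    (o t : E → V) (inv : E → E)
    (hfp : ∀ e, inv e ≠ e) (hinv : ∀ e, inv (inv e) = e)
    (hoi : ∀ e, o (inv e) = t e) (hti : ∀ e, t (inv e) = o e)
    (m : E → Fin d → ℝ) (hm : ∀ e, m (inv e) = - m e)
    (φ : E → ℝ) (hφ : ∀ e, φ (inv e) = - φ e)
    (ed : Fin d → E)
    (hlin : LinearIndependent ℝ fun i => m (ed i)) :
    ∃ θ₀ : Fin d → ℝ, ∀ φt : E → ℝ,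
      (∀ e, φt e =
        if (m e ≠ 0 ∨ φ e ≠ 0) ∧ (∀ i, e ≠ ed i ∧ e ≠ inv (ed i))
        then φ e + ∑ j, m e j * θ₀ j else 0) →
      (∀ e, φt (inv e) = - φt e) ∧
      (∀ (θ : Fin d → ℝ) (f : V → ℂ) (v : V),
        fiberLap o t m φ θ f v = fiberLap o t m φt (θ - θ₀) f v) ∧
      suppCard φt + 2 * d ≤ (Finset.univ.filter fun e => m e ≠ 0 ∨ φ e ≠ 0).card := by
  -- Build the matrix of the vectors `m (ed i)` and solve for `θ₀`.
  classical
  set M : Matrix (Fin d) (Fin d) ℝ := Matrix.of fun i j => m (ed i) j with hM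
  have hunit : IsUnit M := Matrix.linearIndependent_rows_iff_isUnit.1 hlin
  obtain ⟨θ₀, hθ₀⟩ := Matrix.mulVec_surjective_iff_isUnit.2 hunit (fun i => - φ (ed i))
  have hθ : ∀ i, ∑ j, m (ed i) j * θ₀ j = - φ (ed i) := by
    intro i
    have := congrFun hθ₀ i
    simpa [Matrix.mulVec, dotProduct, hM] using this
  refine ⟨θ₀, fun φt hφt => ?_⟩
  -- invertibility facts
  have hinvinj : Function.Injective inv := by
    intro a b h
    have := congrArg inv h
    rwa [hinv, hinv] at this
  have hedinj : Function.Injective ed := fun i j h => hlin.injective (by rw [h])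
  have hmne : ∀ i, m (ed i) ≠ 0 := fun i => hlin.ne_zero i
  -- the defining condition
  have hcond : ∀ e, ((m e ≠ 0 ∨ φ e ≠ 0) ∧ (∀ i, e ≠ ed i ∧ e ≠ inv (ed i))) ↔
      ((m (inv e) ≠ 0 ∨ φ (inv e) ≠ 0) ∧ (∀ i, inv e ≠ ed i ∧ inv e ≠ inv (ed i))) := by
    intro e
    constructor
    · rintro ⟨h1, h2⟩
      refine ⟨?_, fun i => ⟨?_, ?_⟩⟩
      · rcases h1 with h | h
        · left; simp [hm, neg_eq_zero]; simpa [neg_eq_zero] using h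
        · right; simp [hφ, neg_eq_zero]; simpa using h
      · intro h; exact (h2 i).2 (by rw [← h, hinv])
      · intro h; exact (h2 i).1 (hinvinj h)
    · rintro ⟨h1, h2⟩
      refine ⟨?_, fun i => ⟨?_, ?_⟩⟩
      · rcases h1 with h | h
        · left; intro h0; rw [hm e, h0, neg_zero] at h; exact h rfl
        · right; intro h0; rw [hφ e, h0, neg_zero] at h; exact h rfl
      · intro h; exact (h2 i).2 (congrArg inv h)
      · intro h; exact (h2 i).1 (by rw [h, hinv])
  -- key value computation
  have hval : ∀ e, φt e = if (m e ≠ 0 ∨ φ e ≠ 0) ∧ (∀ i, e ≠ ed i ∧ e ≠ inv (ed i))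
      then φ e + ∑ j, m e j * θ₀ j else 0 := hφt
  -- exponent identity
  have hexp : ∀ e (θ : Fin d → ℝ),
      φ e + ∑ j, m e j * θ j = φt e + ∑ j, m e j * (θ j - θ₀ j) := by
    intro e θ
    have hsplit : ∑ j, m e j * (θ j - θ₀ j)
        = (∑ j, m e j * θ j) - ∑ j, m e j * θ₀ j := by
      rw [← Finset.sum_sub_distrib]; exact Finset.sum_congr rfl fun j _ => by ring
    rw [hsplit, hval e]
    by_cases h : (m e ≠ 0 ∨ φ e ≠ 0) ∧ (∀ i, e ≠ ed i ∧ e ≠ inv (ed i))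
    · rw [if_pos h]; ring
    · rw [if_neg h, zero_add]
      -- need : φ e + ∑ j, m e j * θ₀ j = 0
      have hz : φ e + ∑ j, m e j * θ₀ j = 0 := by
        rw [not_and_or] at h
        rcases h with h | h
        · push_neg at h
          simp [h.1, h.2]
        · push_neg at h
          obtain ⟨i, hi⟩ := h
          by_cases he : e = ed i
          · subst he; rw [hθ i]; ring
          · have he2 : e = inv (ed i) := by tauto
            subst he2
            rw [hm, hφ]
            have : ∑ j, (- m (ed i)) j * θ₀ j = - ∑ j, m (ed i) j * θ₀ j := by
              rw [← Finset.sum_neg_distrib]; exact Finset.sum_congr rfl fun j _ => by simp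
            rw [this, hθ i]
            ring
      linarith
  refine ⟨?_, ?_, ?_⟩
  · -- 1-form property
    intro e
    rw [hval (inv e), hval e]
    by_cases h : (m e ≠ 0 ∨ φ e ≠ 0) ∧ (∀ i, e ≠ ed i ∧ e ≠ inv (ed i))
    · rw [if_pos ((hcond e).1 h), if_pos h, hm, hφ]
      have : ∑ j, (- m e) j * θ₀ j = - ∑ j, m e j * θ₀ j := by
        rw [← Finset.sum_neg_distrib]; exact Finset.sum_congr rfl fun j _ => by simp
      rw [this]; ring
    · rw [if_neg (fun hc => h ((hcond e).2 hc)), if_neg h, neg_zero]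
  · -- Laplacian identity
    intro θ f v
    unfold fiberLap
    congr 1
    refine Finset.sum_congr rfl fun e _ => ?_
    have h : ((φ e + ∑ i, m e i * θ i : ℝ) : ℂ)
        = ((φt e + ∑ i, m e i * ((θ - θ₀) i) : ℝ) : ℂ) := by
      norm_cast
      simpa using hexp e θ
    rw [h]
  · -- cardinality bound
    set S : Finset E := Finset.univ.filter fun e => m e ≠ 0 ∨ φ e ≠ 0 with hS
    set B : Finset E := (Finset.univ.image ed) ∪ (Finset.univ.image fun i => inv (ed i)) with hB
    have hsupp : (Finset.univ.filter fun e => φt e ≠ 0) ⊆ S := by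
      intro e he
      simp only [Finset.mem_filter, Finset.mem_univ, true_and] at he
      simp only [hS, Finset.mem_filter, Finset.mem_univ, true_and]
      rw [hval e] at he
      by_cases h : (m e ≠ 0 ∨ φ e ≠ 0) ∧ (∀ i, e ≠ ed i ∧ e ≠ inv (ed i))
      · exact h.1
      · simp [h] at he
    have hBS : B ⊆ S := by
      intro e he
      simp only [hB, Finset.mem_union, Finset.mem_image, Finset.mem_univ, true_and] at he
      simp only [hS, Finset.mem_filter, Finset.mem_univ, true_and]
      rcases he with ⟨i, rfl⟩ | ⟨i, rfl⟩
      · exact Or.inl (hmne i)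
      · left; rw [hm]; simpa [neg_eq_zero] using hmne i
    have hdisj : Disjoint (Finset.univ.filter fun e => φt e ≠ 0) B := by
      rw [Finset.disjoint_left]
      intro e he heB
      simp only [Finset.mem_filter, Finset.mem_univ, true_and] at he
      simp only [hB, Finset.mem_union, Finset.mem_image, Finset.mem_univ, true_and] at heB
      rw [hval e] at he
      apply he
      rw [if_neg]
      rintro ⟨-, h2⟩
      rcases heB with ⟨i, rfl⟩ | ⟨i, rfl⟩
      · exact (h2 i).1 rfl
      · exact (h2 i).2 rfl
    have hBcard : B.card = 2 * d := by
      have hdisjB : Disjoint (Finset.univ.image ed) (Finset.univ.image fun i => inv (ed i)) := by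
        rw [Finset.disjoint_left]
        rintro e he1 he2
        simp only [Finset.mem_image, Finset.mem_univ, true_and] at he1 he2
        obtain ⟨i, rfl⟩ := he1
        obtain ⟨j, hj⟩ := he2
        by_cases hij : i = j
        · subst hij; exact hfp (ed i) hj
        · have hmm : m (ed i) = - m (ed j) := by rw [← hj, hm]
          exfalso
          have hpair := Fintype.linearIndependent_iff.1 hlin
            (fun k => (if k = i then (1:ℝ) else 0) + (if k = j then 1 else 0)) ?_ i
          · simp [hij] at hpair
          · have hterm : ∀ k, ((if k = i then (1:ℝ) else 0) + (if k = j then 1 else 0)) • m (ed k)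
                = (if k = i then m (ed i) else 0) + (if k = j then m (ed j) else 0) := by
              intro k
              by_cases h1 : k = i <;> by_cases h2 : k = j
              · subst h1; exact absurd h2 hij
              · simp [h1, h2, hij]
              · simp [h1, h2, Ne.symm hij]
              · simp [h1, h2]
            rw [Finset.sum_congr rfl (fun k _ => hterm k), Finset.sum_add_distrib,
              Finset.sum_ite_eq' Finset.univ i, Finset.sum_ite_eq' Finset.univ j]
            simp [hmm]
      have hinj2 : Function.Injective fun i => inv (ed i) := fun a b h => hedinj (hinvinj h)
      rw [hB, Finset.card_union_of_disjoint hdisjB,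
        Finset.card_image_of_injective _ hedinj,
        Finset.card_image_of_injective _ hinj2,
        Finset.card_univ, Fintype.card_fin]
      ring
    calc suppCard φt + 2 * d
        = ((Finset.univ.filter fun e => φt e ≠ 0) ∪ B).card := by
          rw [Finset.card_union_of_disjoint hdisj, hBcard]; rfl
      _ ≤ S.card := Finset.card_le_card (Finset.union_subset hsupp hBS)
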